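/- Measuring the output of a merge is equivalent to correlated measurements of both inputs: for all s,r ∈ {0,1}, A_{H,s}·K_{H,r} = A_{H,s}⊗A_{H,s⊕r} and A_{V,s}·K_{V,r} = A_{V,s}⊗A_{V,s⊕r}, where ⊕ is addition mod 2. -/

import Mathlib

open Matrix Kronecker

noncomputable section

/-- The computational basis state `|0⟩` of a qubit. -/
def ket0 : Fin 2 → ℂ := fun i => if i = 0 then 1 else 0
/-- The computational basis state `|1⟩` of a qubit. -/
def ket1 : Fin 2 → ℂ := fun i => if i = 1 then 1 else 0
/-- The state `|+⟩ = (|0⟩ + |1⟩)/√2`. -/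
def ketP : Fin 2 → ℂ := (Real.sqrt 2 : ℂ)⁻¹ • (ket0 + ket1)
/-- The state `|−⟩ = (|0⟩ − |1⟩)/√2`. -/
def ketM : Fin 2 → ℂ := (Real.sqrt 2 : ℂ)⁻¹ • (ket0 - ket1)

/-- The outer product `|ψ⟩⟨φ|` as a 2×2 matrix. -/
def outer (ψ φ : Fin 2 → ℂ) : Matrix (Fin 2) (Fin 2) ℂ :=
  fun i j => ψ i * star (φ j)

/-- The outer product `|ψ⟩⟨φχ|` as a linear map `ℂ²⊗ℂ² → ℂ²` (a 2×4 matrix,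
with columns indexed by the Kronecker-product basis of `ℂ²⊗ℂ²`). -/
def outerM (ψ φ χ : Fin 2 → ℂ) : Matrix (Fin 2) (Fin 2 × Fin 2) ℂ :=
  fun i p => ψ i * star (φ p.1 * χ p.2)

/-- The bra `⟨ψ|` as a linear functional `ℂ² → ℂ` (a 1×2 matrix). -/
def braM (ψ : Fin 2 → ℂ) : Matrix (Fin 1) (Fin 2) ℂ := fun _ j => star (ψ j)

/-- `K_{H,0} = |0⟩⟨00| + |1⟩⟨11|`. -/
def KH0 : Matrix (Fin 2) (Fin 2 × Fin 2) ℂ := outerM ket0 ket0 ket0 + outerM ket1 ket1 ket1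
/-- `K_{H,1} = |0⟩⟨01| + |1⟩⟨10|`. -/
def KH1 : Matrix (Fin 2) (Fin 2 × Fin 2) ℂ := outerM ket0 ket0 ket1 + outerM ket1 ket1 ket0
/-- `K_{V,0} = |+⟩⟨++| + |−⟩⟨−−|`. -/
def KV0 : Matrix (Fin 2) (Fin 2 × Fin 2) ℂ := outerM ketP ketP ketP + outerM ketM ketM ketM
/-- `K_{V,1} = |+⟩⟨+−| + |−⟩⟨−+|`. -/
def KV1 : Matrix (Fin 2) (Fin 2 × Fin 2) ℂ := outerM ketP ketP ketM + outerM ketM ketM ketP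

/-- `A_{H,0} = ⟨0|`. -/
def AH0 : Matrix (Fin 1) (Fin 2) ℂ := braM ket0
/-- `A_{H,1} = ⟨1|`. -/
def AH1 : Matrix (Fin 1) (Fin 2) ℂ := braM ket1
/-- `A_{V,0} = ⟨+|`. -/
def AV0 : Matrix (Fin 1) (Fin 2) ℂ := braM ketP
/-- `A_{V,1} = ⟨−|`. -/
def AV1 : Matrix (Fin 1) (Fin 2) ℂ := braM ketM

/-- The Pauli `X` matrix `|0⟩⟨1| + |1⟩⟨0|`. -/
def PX : Matrix (Fin 2) (Fin 2) ℂ := outer ket0 ket1 + outer ket1 ket0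
/-- The Pauli `Z` matrix `|0⟩⟨0| − |1⟩⟨1|`. -/
def PZ : Matrix (Fin 2) (Fin 2) ℂ := outer ket0 ket0 - outer ket1 ket1

/-- The horizontal and vertical merge Kraus operators, indexed by the outcome bit. -/
def KH : Fin 2 → Matrix (Fin 2) (Fin 2 × Fin 2) ℂ := ![KH0, KH1]
def KV : Fin 2 → Matrix (Fin 2) (Fin 2 × Fin 2) ℂ := ![KV0, KV1]

/-- The bra `⟨ψ|` as a row vector (a linear functional on `ℂ²`). -/
def braF (ψ : Fin 2 → ℂ) : Fin 2 → ℂ := fun j => star (ψ j)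

/-- The annihilator functionals `A_{H,s}` and `A_{V,s}`, as row vectors. -/
def AHf : Fin 2 → (Fin 2 → ℂ) := ![braF ket0, braF ket1]
def AVf : Fin 2 → (Fin 2 → ℂ) := ![braF ketP, braF ketM]

/-- The tensor product of two linear functionals on `ℂ²`, as the induced functional
on `ℂ²⊗ℂ²` (a row vector). -/
def tensF (f g : Fin 2 → ℂ) : Fin 2 × Fin 2 → ℂ := fun p => f p.1 * g p.2

set_option maxHeartbeats 1600000 in
lemma key_H00 : Matrix.vecMul (AHf 0) (KH 0) = tensF (AHf 0) (AHf 0) := by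
  have ha : (Real.sqrt 2 : ℂ) ^ 2 = 2 := by
    norm_cast
    rw [sq, Real.mul_self_sqrt (by norm_num)]
  have h2 : (Real.sqrt 2 : ℂ) ≠ 0 := by
    intro h; rw [h] at ha; norm_num at ha
  funext p
  fin_cases p <;>
    simp [Matrix.vecMul, dotProduct, Fin.sum_univ_two, AHf, AVf, KH, KV, KH0, KH1, KV0, KV1,
      outerM, braF, tensF, ket0, ket1, ketP, ketM] <;>
    field_simp <;>
    first
      | ring1
      | linear_combination -(Real.sqrt 2 : ℂ) * ha
      | linear_combination (Real.sqrt 2 : ℂ) * ha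
      | linear_combination (Real.sqrt 2 : ℂ) ^ 2 * ha
      | linear_combination -(Real.sqrt 2 : ℂ) ^ 2 * ha
      | linear_combination ha
      | linear_combination -ha

set_option maxHeartbeats 1600000 in
lemma key_H01 : Matrix.vecMul (AHf 0) (KH 1) = tensF (AHf 0) (AHf 1) := by
  have ha : (Real.sqrt 2 : ℂ) ^ 2 = 2 := by
    norm_cast
    rw [sq, Real.mul_self_sqrt (by norm_num)]
  have h2 : (Real.sqrt 2 : ℂ) ≠ 0 := by
    intro h; rw [h] at ha; norm_num at ha
  funext p
  fin_cases p <;>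
    simp [Matrix.vecMul, dotProduct, Fin.sum_univ_two, AHf, AVf, KH, KV, KH0, KH1, KV0, KV1,
      outerM, braF, tensF, ket0, ket1, ketP, ketM] <;>
    field_simp <;>
    first
      | ring1
      | linear_combination -(Real.sqrt 2 : ℂ) * ha
      | linear_combination (Real.sqrt 2 : ℂ) * ha
      | linear_combination (Real.sqrt 2 : ℂ) ^ 2 * ha
      | linear_combination -(Real.sqrt 2 : ℂ) ^ 2 * ha
      | linear_combination ha
      | linear_combination -ha

set_option maxHeartbeats 1600000 in
lemma key_H10 : Matrix.vecMul (AHf 1) (KH 0) = tensF (AHf 1) (AHf 1) := by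
  have ha : (Real.sqrt 2 : ℂ) ^ 2 = 2 := by
    norm_cast
    rw [sq, Real.mul_self_sqrt (by norm_num)]
  have h2 : (Real.sqrt 2 : ℂ) ≠ 0 := by
    intro h; rw [h] at ha; norm_num at ha
  funext p
  fin_cases p <;>
    simp [Matrix.vecMul, dotProduct, Fin.sum_univ_two, AHf, AVf, KH, KV, KH0, KH1, KV0, KV1,
      outerM, braF, tensF, ket0, ket1, ketP, ketM] <;>
    field_simp <;>
    first
      | ring1
      | linear_combination -(Real.sqrt 2 : ℂ) * ha
      | linear_combination (Real.sqrt 2 : ℂ) * ha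
      | linear_combination (Real.sqrt 2 : ℂ) ^ 2 * ha
      | linear_combination -(Real.sqrt 2 : ℂ) ^ 2 * ha
      | linear_combination ha
      | linear_combination -ha

set_option maxHeartbeats 1600000 in
lemma key_H11 : Matrix.vecMul (AHf 1) (KH 1) = tensF (AHf 1) (AHf 0) := by
  have ha : (Real.sqrt 2 : ℂ) ^ 2 = 2 := by
    norm_cast
    rw [sq, Real.mul_self_sqrt (by norm_num)]
  have h2 : (Real.sqrt 2 : ℂ) ≠ 0 := by
    intro h; rw [h] at ha; norm_num at ha
  funext p
  fin_cases p <;>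
    simp [Matrix.vecMul, dotProduct, Fin.sum_univ_two, AHf, AVf, KH, KV, KH0, KH1, KV0, KV1,
      outerM, braF, tensF, ket0, ket1, ketP, ketM] <;>
    field_simp <;>
    first
      | ring1
      | linear_combination -(Real.sqrt 2 : ℂ) * ha
      | linear_combination (Real.sqrt 2 : ℂ) * ha
      | linear_combination (Real.sqrt 2 : ℂ) ^ 2 * ha
      | linear_combination -(Real.sqrt 2 : ℂ) ^ 2 * ha
      | linear_combination ha
      | linear_combination -ha

set_option maxHeartbeats 1600000 in
lemma key_V00 : Matrix.vecMul (AVf 0) (KV 0) = tensF (AVf 0) (AVf 0) := by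
  have ha : (Real.sqrt 2 : ℂ) ^ 2 = 2 := by
    norm_cast
    rw [sq, Real.mul_self_sqrt (by norm_num)]
  have h2 : (Real.sqrt 2 : ℂ) ≠ 0 := by
    intro h; rw [h] at ha; norm_num at ha
  funext p
  fin_cases p <;>
    simp [Matrix.vecMul, dotProduct, Fin.sum_univ_two, AHf, AVf, KH, KV, KH0, KH1, KV0, KV1,
      outerM, braF, tensF, ket0, ket1, ketP, ketM] <;>
    field_simp <;>
    first
      | ring1
      | linear_combination -(Real.sqrt 2 : ℂ) * ha
      | linear_combination (Real.sqrt 2 : ℂ) * ha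
      | linear_combination (Real.sqrt 2 : ℂ) ^ 2 * ha
      | linear_combination -(Real.sqrt 2 : ℂ) ^ 2 * ha
      | linear_combination ha
      | linear_combination -ha

set_option maxHeartbeats 1600000 in
lemma key_V01 : Matrix.vecMul (AVf 0) (KV 1) = tensF (AVf 0) (AVf 1) := by
  have ha : (Real.sqrt 2 : ℂ) ^ 2 = 2 := by
    norm_cast
    rw [sq, Real.mul_self_sqrt (by norm_num)]
  have h2 : (Real.sqrt 2 : ℂ) ≠ 0 := by
    intro h; rw [h] at ha; norm_num at ha
  funext p
  fin_cases p <;>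
    simp [Matrix.vecMul, dotProduct, Fin.sum_univ_two, AHf, AVf, KH, KV, KH0, KH1, KV0, KV1,
      outerM, braF, tensF, ket0, ket1, ketP, ketM] <;>
    field_simp <;>
    first
      | ring1
      | linear_combination -(Real.sqrt 2 : ℂ) * ha
      | linear_combination (Real.sqrt 2 : ℂ) * ha
      | linear_combination (Real.sqrt 2 : ℂ) ^ 2 * ha
      | linear_combination -(Real.sqrt 2 : ℂ) ^ 2 * ha
      | linear_combination ha
      | linear_combination -ha

set_option maxHeartbeats 1600000 in
lemma key_V10 : Matrix.vecMul (AVf 1) (KV 0) = tensF (AVf 1) (AVf 1) := by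
  have ha : (Real.sqrt 2 : ℂ) ^ 2 = 2 := by
    norm_cast
    rw [sq, Real.mul_self_sqrt (by norm_num)]
  have h2 : (Real.sqrt 2 : ℂ) ≠ 0 := by
    intro h; rw [h] at ha; norm_num at ha
  funext p
  fin_cases p <;>
    simp [Matrix.vecMul, dotProduct, Fin.sum_univ_two, AHf, AVf, KH, KV, KH0, KH1, KV0, KV1,
      outerM, braF, tensF, ket0, ket1, ketP, ketM] <;>
    field_simp <;>
    first
      | ring1
      | linear_combination -(Real.sqrt 2 : ℂ) * ha
      | linear_combination (Real.sqrt 2 : ℂ) * ha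
      | linear_combination (Real.sqrt 2 : ℂ) ^ 2 * ha
      | linear_combination -(Real.sqrt 2 : ℂ) ^ 2 * ha
      | linear_combination ha
      | linear_combination -ha

set_option maxHeartbeats 1600000 in
lemma key_V11 : Matrix.vecMul (AVf 1) (KV 1) = tensF (AVf 1) (AVf 0) := by
  have ha : (Real.sqrt 2 : ℂ) ^ 2 = 2 := by
    norm_cast
    rw [sq, Real.mul_self_sqrt (by norm_num)]
  have h2 : (Real.sqrt 2 : ℂ) ≠ 0 := by
    intro h; rw [h] at ha; norm_num at ha
  funext p
  fin_cases p <;>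
    simp [Matrix.vecMul, dotProduct, Fin.sum_univ_two, AHf, AVf, KH, KV, KH0, KH1, KV0, KV1,
      outerM, braF, tensF, ket0, ket1, ketP, ketM] <;>
    field_simp <;>
    first
      | ring1
      | linear_combination -(Real.sqrt 2 : ℂ) * ha
      | linear_combination (Real.sqrt 2 : ℂ) * ha
      | linear_combination (Real.sqrt 2 : ℂ) ^ 2 * ha
      | linear_combination -(Real.sqrt 2 : ℂ) ^ 2 * ha
      | linear_combination ha
      | linear_combination -ha

/-- Measuring the output of a merge is equivalent to correlated measurements of both
inputs: for all `s,r ∈ {0,1}`, `A_{H,s}·K_{H,r} = A_{H,s}⊗A_{H,s⊕r}` and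
`A_{V,s}·K_{V,r} = A_{V,s}⊗A_{V,s⊕r}`, where `⊕` is addition mod 2. -/
theorem measure_after_merge :
    ∀ s r : Fin 2,
      Matrix.vecMul (AHf s) (KH r) = tensF (AHf s) (AHf (s + r)) ∧
      Matrix.vecMul (AVf s) (KV r) = tensF (AVf s) (AVf (s + r)) := by
  intro s r
  fin_cases s <;> fin_cases r <;>
    exact ⟨by first | exact key_H00 | exact key_H01 | exact key_H10 | exact key_H11,
           by first | exact key_V00 | exact key_V01 | exact key_V10 | exact key_V11⟩
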